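/- Suppose [v₁, X] and [y₁, Y] are unitary 2n×2n matrices such that [y₁ᴴ; Yᴴ] A [v₁, X] = [[α, sᴴ],[0, L]] and [y₁ᴴ; Yᴴ] B [v₁, X] = [[β, tᴴ],[0, N]]. Let (μ₁, ṽ₁) with ‖ṽ₁‖ = 1 be an approximate eigenpair with residual r = Aṽ₁ − μ₁Bṽ₁, and suppose L − μ₁N is invertible with sep(μ₁,(L,N)) := ‖(L − μ₁N)⁻¹‖⁻¹. Then sin∠(v₁, ṽ₁) ≤ ‖r‖ / sep(μ₁,(L,N)), where sin∠(v₁, ṽ₁) = ‖Xᴴṽ₁‖. -/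

import Mathlib

open Matrix Polynomial

/-- Euclidean norm of a complex vector. -/
noncomputable def vnorm {ι : Type*} [Fintype ι] (x : ι → ℂ) : ℝ :=
  Real.sqrt (∑ i, ‖x i‖ ^ 2)

/-- Spectral norm (operator 2-norm) of a complex matrix. -/
noncomputable def spec {ι κ : Type*} [Fintype ι] [Fintype κ] [DecidableEq κ]
    (A : Matrix ι κ ℂ) : ℝ :=
  ‖LinearMap.toContinuousLinearMap (Matrix.toEuclideanLin A)‖

/-- Sine of the angle between two vectors: distance from a/‖a‖ to span{b}. -/
noncomputable def sAngle {ι : Type*} [Fintype ι] (a b : ι → ℂ) : ℝ :=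
  ⨅ α : ℂ, vnorm ((vnorm a)⁻¹ • a - α • b)

lemma vnorm_eq {ι : Type*} [Fintype ι] (x : ι → ℂ) :
    vnorm x = ‖(WithLp.equiv 2 (ι → ℂ)).symm x‖ := by
  rw [vnorm, EuclideanSpace.norm_eq]
  simp

lemma vnorm_mulVec_le {ι κ : Type*} [Fintype ι] [Fintype κ] [DecidableEq κ]
    (A : Matrix ι κ ℂ) (x : κ → ℂ) :
    vnorm (A *ᵥ x) ≤ spec A * vnorm x := by
  rw [vnorm_eq, vnorm_eq]
  convert (LinearMap.toContinuousLinearMap (Matrix.toEuclideanLin A)).le_opNorm ((WithLp.equiv 2 (κ → ℂ)).symm x) using 2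
  all_goals rfl

lemma sum_sq_eq_re_dot {ι : Type*} [Fintype ι] (w : ι → ℂ) :
    ∑ i, ‖w i‖ ^ 2 = (star w ⬝ᵥ w).re := by
  simp [dotProduct, Complex.re_sum]
  congr 1
  ext i
  simp [Pi.star_apply, RCLike.star_def, ← Complex.normSq_eq_norm_sq,
    Complex.normSq_eq_conj_mul_self, Complex.normSq_apply]

lemma vnorm_nonneg {ι : Type*} [Fintype ι] (x : ι → ℂ) : 0 ≤ vnorm x :=
  Real.sqrt_nonneg _

lemma vnorm_block_le {m κ : Type*} [Fintype m] [Fintype κ] [DecidableEq m]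
    (y₁ : m → ℂ) (Y : Matrix m κ ℂ)
    (hY2 : Matrix.fromCols (Matrix.replicateCol Unit y₁) Y *
        (Matrix.fromCols (Matrix.replicateCol Unit y₁) Y)ᴴ = 1)
    (r : m → ℂ) : vnorm (Yᴴ *ᵥ r) ≤ vnorm r := by
  set U := Matrix.fromCols (Matrix.replicateCol Unit y₁) Y with hU
  have h1 : vnorm (Uᴴ *ᵥ r) = vnorm r := by
    unfold vnorm
    congr 1
    rw [sum_sq_eq_re_dot, sum_sq_eq_re_dot, star_mulVec, conjTranspose_conjTranspose,
      Matrix.dotProduct_mulVec, Matrix.vecMul_vecMul, hY2, Matrix.vecMul_one]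
  have h2 : vnorm (Yᴴ *ᵥ r) ≤ vnorm (Uᴴ *ᵥ r) := by
    rw [hU, Matrix.conjTranspose_fromCols_eq_fromRows_conjTranspose, vnorm, vnorm]
    apply Real.sqrt_le_sqrt
    rw [Matrix.fromRows_mulVec, Fintype.sum_sum_type]
    simpa using le_add_of_nonneg_left (Finset.sum_nonneg fun i _ => by positivity)
  exact h2.trans h1.le

theorem stmt5 {n : ℕ} (A B : Matrix (Fin (2 * n)) (Fin (2 * n)) ℂ)
    (v₁ y₁ : Fin (2 * n) → ℂ)
    (X Y : Matrix (Fin (2 * n)) (Fin (2 * n - 1)) ℂ)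
    -- [v₁, X] and [y₁, Y] are unitary
    (hV1 : (Matrix.fromCols (Matrix.replicateCol Unit v₁) X)ᴴ *
        Matrix.fromCols (Matrix.replicateCol Unit v₁) X = 1)
    (hV2 : Matrix.fromCols (Matrix.replicateCol Unit v₁) X *
        (Matrix.fromCols (Matrix.replicateCol Unit v₁) X)ᴴ = 1)
    (hY1 : (Matrix.fromCols (Matrix.replicateCol Unit y₁) Y)ᴴ *
        Matrix.fromCols (Matrix.replicateCol Unit y₁) Y = 1)
    (hY2 : Matrix.fromCols (Matrix.replicateCol Unit y₁) Y *
        (Matrix.fromCols (Matrix.replicateCol Unit y₁) Y)ᴴ = 1)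
    -- block triangular decomposition: Yᴴ A v₁ = 0, Yᴴ B v₁ = 0, L = Yᴴ A X, N = Yᴴ B X
    (hAz : (Yᴴ * A) *ᵥ v₁ = 0) (hBz : (Yᴴ * B) *ᵥ v₁ = 0)
    (L N : Matrix (Fin (2 * n - 1)) (Fin (2 * n - 1)) ℂ)
    (hL : L = Yᴴ * A * X) (hN : N = Yᴴ * B * X)
    (mu1 : ℂ) (tv1 : Fin (2 * n) → ℂ) (hv : vnorm tv1 = 1)
    (hsep : IsUnit (L - mu1 • N)) :
    vnorm (Xᴴ *ᵥ tv1) ≤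
      vnorm (A *ᵥ tv1 - mu1 • (B *ᵥ tv1)) / (spec (L - mu1 • N)⁻¹)⁻¹ := by
  have hone : Matrix.replicateCol Unit v₁ * (Matrix.replicateCol Unit v₁)ᴴ + X * Xᴴ = 1 := by
    rw [← hV2, Matrix.conjTranspose_fromCols_eq_fromRows_conjTranspose,
      Matrix.fromCols_mul_fromRows]
  have hred : ∀ M : Matrix (Fin (2*n)) (Fin (2*n)) ℂ, (Yᴴ * M) *ᵥ v₁ = 0 →
      (Yᴴ * M) *ᵥ tv1 = (Yᴴ * M * X) *ᵥ (Xᴴ *ᵥ tv1) := by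
    intro M hz
    have hc : (Matrix.replicateCol Unit v₁) *ᵥ ((Matrix.replicateCol Unit v₁)ᴴ *ᵥ tv1) =
        (((Matrix.replicateCol Unit v₁)ᴴ *ᵥ tv1) ()) • v₁ := by
      ext i
      simp [Matrix.mulVec, dotProduct, mul_comm]
    calc (Yᴴ * M) *ᵥ tv1
        = (Yᴴ * M) *ᵥ ((Matrix.replicateCol Unit v₁ * (Matrix.replicateCol Unit v₁)ᴴ + X * Xᴴ) *ᵥ tv1) := by
          rw [hone, Matrix.one_mulVec]
      _ = (Yᴴ * M) *ᵥ ((Matrix.replicateCol Unit v₁) *ᵥ ((Matrix.replicateCol Unit v₁)ᴴ *ᵥ tv1))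
            + (Yᴴ * M) *ᵥ (X *ᵥ (Xᴴ *ᵥ tv1)) := by
          simp only [Matrix.add_mulVec, Matrix.mulVec_add, Matrix.mulVec_mulVec,
            Matrix.mul_assoc]
      _ = (Yᴴ * M * X) *ᵥ (Xᴴ *ᵥ tv1) := by
          rw [hc, Matrix.mulVec_smul, hz, smul_zero, zero_add, Matrix.mulVec_mulVec]
  have hA : (Yᴴ * A) *ᵥ tv1 = L *ᵥ (Xᴴ *ᵥ tv1) := by rw [hred A hAz, hL]
  have hB : (Yᴴ * B) *ᵥ tv1 = N *ᵥ (Xᴴ *ᵥ tv1) := by rw [hred B hBz, hN]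
  have key : (L - mu1 • N) *ᵥ (Xᴴ *ᵥ tv1) = Yᴴ *ᵥ (A *ᵥ tv1 - mu1 • (B *ᵥ tv1)) := by
    rw [Matrix.sub_mulVec, Matrix.smul_mulVec, ← hA, ← hB,
      Matrix.mulVec_sub, Matrix.mulVec_smul, Matrix.mulVec_mulVec, Matrix.mulVec_mulVec]
  have hinv : (L - mu1 • N)⁻¹ * (L - mu1 • N) = 1 :=
    Matrix.nonsing_inv_mul _ ((Matrix.isUnit_iff_isUnit_det _).mp hsep)
  have hx : Xᴴ *ᵥ tv1 = (L - mu1 • N)⁻¹ *ᵥ (Yᴴ *ᵥ (A *ᵥ tv1 - mu1 • (B *ᵥ tv1))) := by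
    rw [← key, Matrix.mulVec_mulVec, hinv, Matrix.one_mulVec]
  rw [division_def, inv_inv]
  calc vnorm (Xᴴ *ᵥ tv1)
      = vnorm ((L - mu1 • N)⁻¹ *ᵥ (Yᴴ *ᵥ (A *ᵥ tv1 - mu1 • (B *ᵥ tv1)))) := by rw [hx]
    _ ≤ spec (L - mu1 • N)⁻¹ * vnorm (Yᴴ *ᵥ (A *ᵥ tv1 - mu1 • (B *ᵥ tv1))) :=
        vnorm_mulVec_le _ _
    _ ≤ spec (L - mu1 • N)⁻¹ * vnorm (A *ᵥ tv1 - mu1 • (B *ᵥ tv1)) :=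
        mul_le_mul_of_nonneg_left (vnorm_block_le y₁ Y hY2 _) (norm_nonneg _)
    _ = vnorm (A *ᵥ tv1 - mu1 • (B *ᵥ tv1)) * spec (L - mu1 • N)⁻¹ := mul_comm _ _
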